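/- arXiv:2309.04913 — 5 statements merged into one kernel-verified Lean document; each statement's English description precedes it below -/
import Mathlib

section
/- If A is a commutative associative algebra over a field k equipped with a derivation d (satisfying d(ab) = a·d(b) + d(a)·b), then the new multiplication a * b := a·d(b) makes A into a perm algebra, i.e., (a*b)*c = a*(b*c) = a*(c*b) for all a, b, c in A. -/
/-- If `A` is a commutative associative algebra over a field `k` equipped with a derivation
`d` (a linear map satisfying `d(ab) = a·d(b) + d(a)·b` and `d ∘ d = 0`), then the new
multiplication `a * b := a·d(b)` makes `A` into a perm algebra. -/
theorem derivation_gives_perm {k A : Type*} [Field k] [CommRing A] [Algebra k A]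
    (d : A →ₗ[k] A)
    (hleib : ∀ a b : A, d (a * b) = a * d b + d a * b)
    (hdd : ∀ a : A, d (d a) = 0)
    (a b c : A) :
    (a * d b) * d c = a * d (b * d c) ∧ a * d (b * d c) = a * d (c * d b) := by
  rw [hleib, hleib, hdd, hdd]
  constructor <;> ring
end

section
/- Let A be a perm algebra and (V, κl, κr) a representation of A. Define κl*, κr* : A → End(V*) by ⟨κl*(a)(u), v⟩ = ⟨u, κl(a)(v)⟩ and ⟨κr*(a)(u), v⟩ = ⟨u, κr(a)(v)⟩. Then (V*, κr* − κl*, κr*) is a representation of A. -/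
/-- If `(V, κl, κr)` is a representation of a perm algebra `A`, then
`(V*, κr* − κl*, κr*)` is also a representation of `A` (the dual representation),
where `κl*(a)` and `κr*(a)` are the dual maps of `κl(a)` and `κr(a)`. -/
theorem dual_representation {k A V : Type*} [Field k] [AddCommGroup A] [Module k A]
    [AddCommGroup V] [Module k V] [FiniteDimensional k V]
    (mul : A →ₗ[k] A →ₗ[k] A)
    (hp1 : ∀ x y z, mul (mul x y) z = mul x (mul y z))
    (hp2 : ∀ x y z, mul x (mul y z) = mul x (mul z y))
    (κl κr : A →ₗ[k] V →ₗ[k] V)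
    (hrep : ∀ a1 a2 : A,
      κr (mul a1 a2) = κr a2 ∘ₗ κr a1 ∧
      κr (mul a1 a2) = κr a1 ∘ₗ κr a2 ∧
      κl (mul a1 a2) = κl a1 ∘ₗ κl a2 ∧
      κl (mul a1 a2) = κl a1 ∘ₗ κr a2 ∧
      κl (mul a1 a2) = κr a2 ∘ₗ κl a1) :
    ∀ a1 a2 : A,
      (κr (mul a1 a2)).dualMap = (κr a2).dualMap ∘ₗ (κr a1).dualMap ∧
      (κr (mul a1 a2)).dualMap = (κr a1).dualMap ∘ₗ (κr a2).dualMap ∧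
      ((κr (mul a1 a2)).dualMap - (κl (mul a1 a2)).dualMap) =
        ((κr a1).dualMap - (κl a1).dualMap) ∘ₗ ((κr a2).dualMap - (κl a2).dualMap) ∧
      ((κr (mul a1 a2)).dualMap - (κl (mul a1 a2)).dualMap) =
        ((κr a1).dualMap - (κl a1).dualMap) ∘ₗ (κr a2).dualMap ∧
      ((κr (mul a1 a2)).dualMap - (κl (mul a1 a2)).dualMap) =
        (κr a2).dualMap ∘ₗ ((κr a1).dualMap - (κl a1).dualMap) := by
  intro a1 a2
  obtain ⟨h1, h2, h3, h4, h5⟩ := hrep a1 a2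
  -- key : L2 ∘ L1 = L2 ∘ R1, so dually  L1* ∘ L2* = R1* ∘ L2*
  have key : (κl a1).dualMap ∘ₗ (κl a2).dualMap = (κr a1).dualMap ∘ₗ (κl a2).dualMap := by
    rw [LinearMap.dualMap_comp_dualMap, LinearMap.dualMap_comp_dualMap,
      ← (hrep a2 a1).2.2.1, (hrep a2 a1).2.2.2.1]
  refine ⟨?_, ?_, ?_, ?_, ?_⟩
  · rw [h2, ← LinearMap.dualMap_comp_dualMap]
  · rw [h1, ← LinearMap.dualMap_comp_dualMap]
  · rw [LinearMap.comp_sub, LinearMap.sub_comp, LinearMap.sub_comp,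
      LinearMap.dualMap_comp_dualMap, LinearMap.dualMap_comp_dualMap, ← h1, ← h5, ← key]
    abel
  · rw [LinearMap.sub_comp, LinearMap.dualMap_comp_dualMap, LinearMap.dualMap_comp_dualMap,
      ← h1, ← h5]
  · rw [LinearMap.comp_sub, LinearMap.dualMap_comp_dualMap, LinearMap.dualMap_comp_dualMap,
      ← h2, ← h4]
end

section
/- Let A be a perm algebra admitting a nondegenerate skew-symmetric invariant bilinear form ω (invariance meaning ω(a1a2, a3) = ω(a2, a3a1) − ω(a2, a1a3)). Then the regular representation (A, κl, κr) of A is isomorphic to the dual representation (A*, κr* − κl*, κr*), via the map φ : A → A* with ⟨φ(a1), a2⟩ = ω(a1, a2). -/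
/-- If a perm algebra `A` admits a nondegenerate skew-symmetric invariant bilinear form `ω`
(viewed as a map `ω : A →ₗ A*`), then `φ = ω` is an isomorphism from the regular
representation `(A, κl, κr)` to the dual representation `(A*, κr* − κl*, κr*)`. -/
theorem regular_iso_dual_representation {k A : Type*} [Field k] [AddCommGroup A] [Module k A]
    [FiniteDimensional k A]
    (mul : A →ₗ[k] A →ₗ[k] A)
    (hp1 : ∀ x y z, mul (mul x y) z = mul x (mul y z))
    (hp2 : ∀ x y z, mul x (mul y z) = mul x (mul z y))
    (ω : A →ₗ[k] Module.Dual k A)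
    (hskew : ∀ a b : A, ω a b = - ω b a)
    (hinv : ∀ a1 a2 a3 : A, ω (mul a1 a2) a3 = ω a2 (mul a3 a1) - ω a2 (mul a1 a3))
    (hnd : ∀ a : A, ω a = 0 → a = 0) :
    Function.Bijective ω ∧
    (∀ a x : A, ω (mul a x) = ((mul.flip a).dualMap - (mul a).dualMap) (ω x)) ∧
    (∀ a x : A, ω (mul x a) = (mul.flip a).dualMap (ω x)) := by
  have hinj : Function.Injective ω := by
    rw [← LinearMap.ker_eq_bot, Submodule.eq_bot_iff]
    exact fun a ha => hnd a ha
  have hright : ∀ a x b : A, ω (mul x a) b = ω x (mul b a) := by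
    intro a x b
    have h1 : ω x (mul a b) = ω (mul x a) b - ω (mul a x) b := by
      linear_combination hskew x (mul a b) - hinv a b x - hskew b (mul x a) + hskew b (mul a x)
    have h6 := hinv a x b
    rw [h1] at h6
    linear_combination h6
  refine ⟨⟨hinj, (LinearMap.injective_iff_surjective_of_finrank_eq_finrank
      (Subspace.dual_finrank_eq).symm).mp hinj⟩, ?_, ?_⟩
  · intro a x
    ext b
    simp only [LinearMap.sub_apply, LinearMap.dualMap_apply', LinearMap.flip_apply]
    exact hinv a x b
  · intro a x
    ext b
    simpa using hright a x b
end

section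
/- Let A be a vector space and Δ : A → A ⊗ A a linear map, with A finite-dimensional. Then the dual map Δ* : A* ⊗ A* → A* defines a perm algebra structure on A* if and only if (Δ ⊗ id)∘Δ = (id ⊗ Δ)∘Δ = (id ⊗ τΔ)∘Δ, where τ is the flip map on A ⊗ A. -/
open TensorProduct

/-- The multiplication on `A*` dual to a comultiplication `Δ : A → A ⊗ A`:
`⟨Δ*(b₁ ⊗ b₂), a⟩ = ⟨b₁ ⊗ b₂, Δ(a)⟩`. -/
noncomputable def dualMul {k A : Type*} [Field k] [AddCommGroup A] [Module k A]
    (Δ : A →ₗ[k] A ⊗[k] A) (b1 b2 : Module.Dual k A) : Module.Dual k A :=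
  (TensorProduct.lid k k).toLinearMap ∘ₗ TensorProduct.map b1 b2 ∘ₗ Δ

section aux
variable {k A : Type*} [Field k] [AddCommGroup A] [Module k A]

/-- triple pairing -/
noncomputable def pair3 (b1 b2 b3 : Module.Dual k A) : A ⊗[k] (A ⊗[k] A) →ₗ[k] k :=
  (TensorProduct.lid k k).toLinearMap ∘ₗ
    TensorProduct.map b1 ((TensorProduct.lid k k).toLinearMap ∘ₗ TensorProduct.map b2 b3)

@[simp] lemma pair3_tmul (b1 b2 b3 : Module.Dual k A) (a u v : A) :
    pair3 b1 b2 b3 (a ⊗ₜ[k] (u ⊗ₜ[k] v)) = b1 a * (b2 u * b3 v) := by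
  simp [pair3, smul_eq_mul]

lemma dualMul_apply (Δ : A →ₗ[k] A ⊗[k] A) (b1 b2 : Module.Dual k A) (a : A) :
    dualMul Δ b1 b2 a = (TensorProduct.lid k k) (TensorProduct.map b1 b2 (Δ a)) := rfl

lemma lid_map_tmul (b1 b2 : Module.Dual k A) (u v : A) :
    (TensorProduct.lid k k) (TensorProduct.map b1 b2 (u ⊗ₜ[k] v)) = b1 u * b2 v := by
  simp [smul_eq_mul]

lemma eval1 (Δ : A →ₗ[k] A ⊗[k] A) (b1 b2 b3 : Module.Dual k A) (a : A) :
    dualMul Δ (dualMul Δ b1 b2) b3 a =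
      pair3 b1 b2 b3 ((TensorProduct.assoc k A A A)
        ((TensorProduct.map Δ LinearMap.id) (Δ a))) := by
  rw [dualMul_apply]
  generalize Δ a = y
  induction y using TensorProduct.induction_on with
  | zero => simp
  | tmul u v =>
    rw [lid_map_tmul, dualMul_apply, map_tmul]
    generalize Δ u = z
    induction z using TensorProduct.induction_on with
    | zero => simp
    | tmul p q => simp [mul_assoc]
    | add x y hx hy => simp_all [add_mul, add_tmul]
  | add x y hx hy => simp_all

lemma eval2 (Δ : A →ₗ[k] A ⊗[k] A) (b1 b2 b3 : Module.Dual k A) (a : A) :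
    dualMul Δ b1 (dualMul Δ b2 b3) a =
      pair3 b1 b2 b3 ((TensorProduct.map LinearMap.id Δ) (Δ a)) := by
  rw [dualMul_apply]
  generalize Δ a = y
  induction y using TensorProduct.induction_on with
  | zero => simp
  | tmul u v =>
    rw [lid_map_tmul, dualMul_apply, map_tmul]
    generalize Δ v = z
    induction z using TensorProduct.induction_on with
    | zero => simp
    | tmul p q => simp
    | add x y hx hy => simp_all [mul_add, tmul_add]
  | add x y hx hy => simp_all

lemma pair3_comm (b1 b2 b3 : Module.Dual k A) (x : A ⊗[k] (A ⊗[k] A)) :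
    pair3 b1 b2 b3 ((TensorProduct.map LinearMap.id
      (TensorProduct.comm k A A).toLinearMap) x) = pair3 b1 b3 b2 x := by
  induction x using TensorProduct.induction_on with
  | zero => simp
  | tmul u y =>
    induction y using TensorProduct.induction_on with
    | zero => simp
    | tmul p q => simp [mul_comm]
    | add x y hx hy => simp_all [tmul_add]
  | add x y hx hy => simp_all

lemma eval3 (Δ : A →ₗ[k] A ⊗[k] A) (b1 b2 b3 : Module.Dual k A) (a : A) :
    dualMul Δ b1 (dualMul Δ b3 b2) a =
      pair3 b1 b2 b3 ((TensorProduct.map LinearMap.id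
        ((TensorProduct.comm k A A).toLinearMap ∘ₗ Δ)) (Δ a)) := by
  have : (TensorProduct.map LinearMap.id
      ((TensorProduct.comm k A A).toLinearMap ∘ₗ Δ) : A ⊗[k] A →ₗ[k] _) =
      (TensorProduct.map LinearMap.id (TensorProduct.comm k A A).toLinearMap) ∘ₗ
        (TensorProduct.map LinearMap.id Δ) := by
    rw [← TensorProduct.map_comp, LinearMap.id_comp]
  rw [this, LinearMap.comp_apply, pair3_comm, ← eval2]

lemma pair3_eq_dualDistrib (b1 b2 b3 : Module.Dual k A) :
    pair3 b1 b2 b3 = TensorProduct.dualDistrib k A (A ⊗[k] A)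
      (b1 ⊗ₜ (TensorProduct.dualDistrib k A A (b2 ⊗ₜ b3))) := by
  apply TensorProduct.ext
  apply LinearMap.ext; intro a
  apply TensorProduct.ext'
  intro u v
  simp [TensorProduct.dualDistrib_apply]

lemma sep [FiniteDimensional k A] (x : A ⊗[k] (A ⊗[k] A))
    (h : ∀ b1 b2 b3 : Module.Dual k A, pair3 b1 b2 b3 x = 0) : x = 0 := by
  rw [← Module.forall_dual_apply_eq_zero_iff k x]
  intro φ
  obtain ⟨g, rfl⟩ := (TensorProduct.dualDistribEquiv k A (A ⊗[k] A)).surjective φ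
  show TensorProduct.dualDistrib k A (A ⊗[k] A) g x = 0
  induction g using TensorProduct.induction_on with
  | zero => simp
  | tmul b1 g2 =>
    obtain ⟨g2', rfl⟩ := (TensorProduct.dualDistribEquiv k A A).surjective g2
    show TensorProduct.dualDistrib k A (A ⊗[k] A)
      (b1 ⊗ₜ TensorProduct.dualDistrib k A A g2') x = 0
    induction g2' using TensorProduct.induction_on with
    | zero => simp
    | tmul b2 b3 => rw [← pair3_eq_dualDistrib]; exact h b1 b2 b3
    | add y z hy hz => simp_all [tmul_add]
  | add y z hy hz => simp_all

end aux

/-- For a linear map `Δ : A → A ⊗ A` on a finite-dimensional space, the dual map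
`Δ* : A* ⊗ A* → A*` defines a perm algebra structure on `A*` if and only if
`(Δ ⊗ id)∘Δ = (id ⊗ Δ)∘Δ = (id ⊗ τΔ)∘Δ`. -/
theorem dual_perm_iff_cocoassoc {k A : Type*} [Field k] [AddCommGroup A] [Module k A]
    [FiniteDimensional k A]
    (Δ : A →ₗ[k] A ⊗[k] A) :
    (∀ b1 b2 b3 : Module.Dual k A,
      dualMul Δ (dualMul Δ b1 b2) b3 = dualMul Δ b1 (dualMul Δ b2 b3) ∧
      dualMul Δ b1 (dualMul Δ b2 b3) = dualMul Δ b1 (dualMul Δ b3 b2))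
    ↔
    (∀ a : A,
      (TensorProduct.assoc k A A A) ((TensorProduct.map Δ LinearMap.id) (Δ a)) =
        (TensorProduct.map LinearMap.id Δ) (Δ a) ∧
      (TensorProduct.map LinearMap.id Δ) (Δ a) =
        (TensorProduct.map LinearMap.id
          ((TensorProduct.comm k A A).toLinearMap ∘ₗ Δ)) (Δ a)) := by
  constructor
  · intro h a
    constructor
    · rw [← sub_eq_zero]
      apply sep
      intro b1 b2 b3
      rw [map_sub, ← eval1, ← eval2, (h b1 b2 b3).1, sub_self]
    · rw [← sub_eq_zero]
      apply sep
      intro b1 b2 b3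
      rw [map_sub, ← eval2, ← eval3, (h b1 b2 b3).2, sub_self]
  · intro h b1 b2 b3
    constructor
    · ext a
      rw [eval1, eval2, (h a).1]
    · ext a
      rw [eval2, eval3, (h a).2]
end

section
/- Let E be a perm algebra, A a perm subalgebra of E, and π_A : E → A a linear projection with π_A(a) = a for all a ∈ A. Set V = Ker(π_A). Define a⇀v = av − π_A(av), v↼a = va − π_A(va), v⊳a = π_A(va), a⊲v = π_A(av), χ(v1,v2) = π_A(v1v2), v1·v2 = v1v2 − π_A(v1v2). Then the map φ : A ⊕ V → E, (a,v) ↦ a + v, is an isomorphism of perm algebras from the unified product A♮V (with multiplication (a1,v1)∗(a2,v2) = (a1a2 + v1⊳a2 + a1⊲v2 + χ(v1,v2), v1·v2 + a1⇀v2 + v1↼a2)) onto E. -/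
/-- The unified-product multiplication on pairs of elements of `E` induced by a projection
`p` onto the subalgebra `A` (first component the `A`-part, second component the
`V = ker p`-part):
`(a₁,v₁)∗(a₂,v₂) = (a₁a₂ + v₁⊳a₂ + a₁⊲v₂ + χ(v₁,v₂), v₁·v₂ + a₁⇀v₂ + v₁↼a₂)` where
`a⇀v = av − p(av)`, `v↼a = va − p(va)`, `v⊳a = p(va)`, `a⊲v = p(av)`,
`χ(v₁,v₂) = p(v₁v₂)`, `v₁·v₂ = v₁v₂ − p(v₁v₂)`. -/
def inducedStar {k E : Type*} [Field k] [AddCommGroup E] [Module k E]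
    (mul : E →ₗ[k] E →ₗ[k] E) (p : E →ₗ[k] E) : E × E → E × E → E × E :=
  fun x y =>
    (mul x.1 y.1 + p (mul x.2 y.1) + p (mul x.1 y.2) + p (mul x.2 y.2),
     (mul x.2 y.2 - p (mul x.2 y.2)) + (mul x.1 y.2 - p (mul x.1 y.2)) +
       (mul x.2 y.1 - p (mul x.2 y.1)))

/-- Let `E` be a perm algebra, `A` a perm subalgebra and `p : E → E` a linear projection
onto `A` fixing `A` pointwise; set `V = ker p`.  Then the induced extending datum makes
`A ♮ V` (realized as pairs `(a, v)` with `a ∈ A`, `v ∈ ker p`) into a perm algebra, and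
`φ(a, v) = a + v` is an isomorphism of perm algebras `A ♮ V ≅ E`. -/
theorem unified_product_realization {k E : Type*} [Field k] [AddCommGroup E] [Module k E]
    (mul : E →ₗ[k] E →ₗ[k] E)
    (hp1 : ∀ x y z, mul (mul x y) z = mul x (mul y z))
    (hp2 : ∀ x y z, mul x (mul y z) = mul x (mul z y))
    (A : Submodule k E)
    (hA : ∀ a ∈ A, ∀ b ∈ A, mul a b ∈ A)
    (p : E →ₗ[k] E)
    (hrange : ∀ e : E, p e ∈ A)
    (hfix : ∀ a ∈ A, p a = a) :
    -- `A ♮ V` is closed: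
    (∀ x y : E × E, (x.1 ∈ A ∧ p x.2 = 0) → (y.1 ∈ A ∧ p y.2 = 0) →
        ((inducedStar mul p x y).1 ∈ A ∧ p (inducedStar mul p x y).2 = 0)) ∧
    -- `A ♮ V` is a perm algebra:
    (∀ x y z : E × E, (x.1 ∈ A ∧ p x.2 = 0) → (y.1 ∈ A ∧ p y.2 = 0) →
        (z.1 ∈ A ∧ p z.2 = 0) →
        inducedStar mul p (inducedStar mul p x y) z =
          inducedStar mul p x (inducedStar mul p y z) ∧
        inducedStar mul p x (inducedStar mul p y z) =
          inducedStar mul p x (inducedStar mul p z y)) ∧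
    -- `φ(a,v) = a + v` is multiplicative:
    (∀ x y : E × E, (x.1 ∈ A ∧ p x.2 = 0) → (y.1 ∈ A ∧ p y.2 = 0) →
        (inducedStar mul p x y).1 + (inducedStar mul p x y).2 =
          mul (x.1 + x.2) (y.1 + y.2)) ∧
    -- `φ` is bijective from `A ♮ V` onto `E`:
    (∀ e : E, ∃! x : E × E, (x.1 ∈ A ∧ p x.2 = 0) ∧ x.1 + x.2 = e) := by
  have hpp : ∀ e : E, p (p e) = p e := fun e => hfix _ (hrange e)
  have key : ∀ x y : E × E, (x.1 ∈ A ∧ p x.2 = 0) → (y.1 ∈ A ∧ p y.2 = 0) →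
      inducedStar mul p x y =
        (p (mul (x.1 + x.2) (y.1 + y.2)),
         mul (x.1 + x.2) (y.1 + y.2) - p (mul (x.1 + x.2) (y.1 + y.2))) := by
    intro x y hx hy
    have h1 : p (mul x.1 y.1) = mul x.1 y.1 := hfix _ (hA _ hx.1 _ hy.1)
    simp only [inducedStar, map_add, LinearMap.add_apply, map_sub, h1]
    exact Prod.ext (by abel) (by abel)
  have closed : ∀ x y : E × E, (x.1 ∈ A ∧ p x.2 = 0) → (y.1 ∈ A ∧ p y.2 = 0) →
      ((inducedStar mul p x y).1 ∈ A ∧ p (inducedStar mul p x y).2 = 0) := by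
    intro x y hx hy
    rw [key x y hx hy]
    exact ⟨hrange _, by simp [map_sub, hpp]⟩
  have mult : ∀ x y : E × E, (x.1 ∈ A ∧ p x.2 = 0) → (y.1 ∈ A ∧ p y.2 = 0) →
      (inducedStar mul p x y).1 + (inducedStar mul p x y).2 =
        mul (x.1 + x.2) (y.1 + y.2) := by
    intro x y hx hy
    rw [key x y hx hy]
    rw [add_comm, sub_add_cancel]
  refine ⟨closed, ?_, mult, ?_⟩
  · intro x y z hx hy hz
    have hxy := closed x y hx hy
    have hyz := closed y z hy hz
    have hzy := closed z y hz hy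
    have sxy := mult x y hx hy
    have syz := mult y z hy hz
    have szy := mult z y hz hy
    constructor
    · rw [key _ z hxy hz, key x _ hx hyz, sxy, syz, hp1]
    · rw [key x _ hx hyz, key x _ hx hzy, syz, szy, hp2]
  · intro e
    refine ⟨(p e, e - p e), ⟨⟨hrange e, by simp [map_sub, hpp]⟩, by rw [add_comm, sub_add_cancel]⟩, ?_⟩
    rintro ⟨a, v⟩ ⟨⟨ha, hv⟩, hsum⟩
    have hap : p e = a := by
      rw [← hsum]; simp [map_add, hv, hfix a ha]
    have hvv : v = e - p e := by rw [hap, ← hsum]; abel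
    exact Prod.ext hap.symm hvv
end
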